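/- Let L be a complex Lie algebra and suppose elements g₁, g₂, g₃ and families of elements satisfy: √(-1)·[gᵢ⁽⁰⁾, gᵢ⁽ⁿ⁾] = [gᵢ⁽⁰⁾,[gⱼ⁽ᵐ⁾, gₖ⁽ⁿ⁻¹⁻ᵐ⁾]] for all 0 ≤ m ≤ n-1 (with (i,j,k) a cyclic permutation of (1,2,3)), and [gᵢ⁽⁰⁾,gᵢ⁽ⁿ⁾] = -[gⱼ⁽ᵐ⁾,gⱼ⁽ⁿ⁻ᵐ⁾] - [gₖ⁽ⁿ⁻ᵐ⁻¹⁾,gₖ⁽ᵐ⁺¹⁾] for all 0 ≤ m ≤ n-1. If n ≥ 2, then [gᵢ⁽⁰⁾,gᵢ⁽ⁿ⁾] = 0 for all i ∈ {1,2,3}. -/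
import Mathlib


private lemma sumzero {L : Type*} [LieRing L] [LieAlgebra ℂ L] (g : ℕ → L) (n : ℕ) :
    ∑ m ∈ Finset.range (n + 1), ⁅g m, g (n - m)⁆ = 0 := by
  set S := ∑ m ∈ Finset.range (n + 1), ⁅g m, g (n - m)⁆ with hS
  have h := Finset.sum_range_reflect (fun m => ⁅g m, g (n - m)⁆) (n + 1)
  have h2 : ∑ j ∈ Finset.range (n + 1), ⁅g (n + 1 - 1 - j), g (n - (n + 1 - 1 - j))⁆
      = -S := by
    rw [hS, ← Finset.sum_neg_distrib]
    refine Finset.sum_congr rfl fun j hj => ?_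
    have hj' : j ≤ n := Nat.lt_succ_iff.mp (Finset.mem_range.mp hj)
    have e1 : n + 1 - 1 - j = n - j := by omega
    have e2 : n - (n - j) = j := by omega
    rw [e1, e2, ← lie_skew]
  rw [h2, ← hS] at h
  have h3 : (2 : ℂ) • S = 0 := by
    have h4 : S + S = 0 := by nth_rewrite 1 [← h]; exact neg_add_cancel S
    rw [two_smul]; exact h4
  exact (smul_eq_zero.mp h3).resolve_left (by norm_num)

private lemma sumA {L : Type*} [LieRing L] [LieAlgebra ℂ L] (g : ℕ → L) (n : ℕ) :
    ∑ m ∈ Finset.range n, ⁅g m, g (n - m)⁆ = ⁅g 0, g n⁆ := by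
  have h := sumzero g n
  rw [Finset.sum_range_succ, Nat.sub_self, ← lie_skew (g n) (g 0)] at h
  exact add_neg_eq_zero.mp h

private lemma sumB {L : Type*} [LieRing L] [LieAlgebra ℂ L] (g : ℕ → L) (n : ℕ) :
    ∑ m ∈ Finset.range n, ⁅g (n - m - 1), g (m + 1)⁆ = ⁅g 0, g n⁆ := by
  have h0 : ∑ m ∈ Finset.range (n + 1), ⁅g (n - m), g m⁆ = 0 := by
    rw [← neg_eq_zero, ← Finset.sum_neg_distrib]
    rw [← sumzero g n]
    exact Finset.sum_congr rfl fun j hj => (lie_skew _ _)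
  rw [Finset.sum_range_succ'] at h0
  have e : ∀ m, n - (m + 1) = n - m - 1 := fun m => by omega
  simp only [e, Nat.sub_zero, ← lie_skew (g n) (g 0)] at h0
  exact add_neg_eq_zero.mp h0



open Complex in
/-- Lemma 2 counting argument: if
`√-1 • ⁅gᵢ⁽⁰⁾, gᵢ⁽ⁿ⁾⁆ = ⁅gᵢ⁽⁰⁾, ⁅gⱼ⁽ᵐ⁾, gₖ⁽ⁿ⁻¹⁻ᵐ⁾⁆⁆` and
`⁅gᵢ⁽⁰⁾, gᵢ⁽ⁿ⁾⁆ = -⁅gⱼ⁽ᵐ⁾, gⱼ⁽ⁿ⁻ᵐ⁾⁆ - ⁅gₖ⁽ⁿ⁻ᵐ⁻¹⁾, gₖ⁽ᵐ⁺¹⁾⁆` for all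
`0 ≤ m ≤ n-1` and all cyclic permutations `(i,j,k)` of `(1,2,3)`, then for
`n ≥ 2` all `⁅gᵢ⁽⁰⁾, gᵢ⁽ⁿ⁾⁆` vanish. -/
theorem stmt1 {L : Type*} [LieRing L] [LieAlgebra ℂ L]
    (g₁ g₂ g₃ : ℕ → L) (n : ℕ) (hn : 2 ≤ n)
    (h1 : ∀ m, m ≤ n - 1 →
      (I • ⁅g₁ 0, g₁ n⁆ = ⁅g₁ 0, ⁅g₂ m, g₃ (n - 1 - m)⁆⁆ ∧
       I • ⁅g₂ 0, g₂ n⁆ = ⁅g₂ 0, ⁅g₃ m, g₁ (n - 1 - m)⁆⁆ ∧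
       I • ⁅g₃ 0, g₃ n⁆ = ⁅g₃ 0, ⁅g₁ m, g₂ (n - 1 - m)⁆⁆))
    (h2 : ∀ m, m ≤ n - 1 →
      (⁅g₁ 0, g₁ n⁆ = -⁅g₂ m, g₂ (n - m)⁆ - ⁅g₃ (n - m - 1), g₃ (m + 1)⁆ ∧
       ⁅g₂ 0, g₂ n⁆ = -⁅g₃ m, g₃ (n - m)⁆ - ⁅g₁ (n - m - 1), g₁ (m + 1)⁆ ∧
       ⁅g₃ 0, g₃ n⁆ = -⁅g₁ m, g₁ (n - m)⁆ - ⁅g₂ (n - m - 1), g₂ (m + 1)⁆)) :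
    ⁅g₁ 0, g₁ n⁆ = 0 ∧ ⁅g₂ 0, g₂ n⁆ = 0 ∧ ⁅g₃ 0, g₃ n⁆ = 0 := by
  set a := ⁅g₁ 0, g₁ n⁆ with ha
  set b := ⁅g₂ 0, g₂ n⁆ with hb
  set c := ⁅g₃ 0, g₃ n⁆ with hc
  have key : ∀ (x : L) (p q : ℕ → L),
      (∀ m, m ≤ n - 1 → x = -⁅p m, p (n - m)⁆ - ⁅q (n - m - 1), q (m + 1)⁆) →
      (n : ℂ) • x = -⁅p 0, p n⁆ - ⁅q 0, q n⁆ := by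
    intro x p q hx
    have hsum : ∑ m ∈ Finset.range n, x
        = ∑ m ∈ Finset.range n, (-⁅p m, p (n - m)⁆ - ⁅q (n - m - 1), q (m + 1)⁆) :=
      Finset.sum_congr rfl fun m hm => hx m (by
        have := Finset.mem_range.mp hm; omega)
    rw [Finset.sum_const, Finset.card_range] at hsum
    rw [Finset.sum_sub_distrib, Finset.sum_neg_distrib, sumA p n, sumB q n] at hsum
    rw [← Nat.cast_smul_eq_nsmul ℂ] at hsum
    exact hsum
  have e1 : (n : ℂ) • a = -b - c := key a g₂ g₃ fun m hm => (h2 m hm).1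
  have e2 : (n : ℂ) • b = -c - a := key b g₃ g₁ fun m hm => (h2 m hm).2.1
  have e3 : (n : ℂ) • c = -a - b := key c g₁ g₂ fun m hm => (h2 m hm).2.2
  have hn1 : ((n : ℂ) - 1) ≠ 0 := by
    intro h
    have : (n : ℂ) = 1 := by linear_combination h
    have : (n : ℕ) = 1 := by exact_mod_cast this
    omega
  have hab : a = b := by
    have : ((n : ℂ) - 1) • (a - b) = 0 := by
      rw [smul_sub, sub_smul, sub_smul, one_smul, one_smul, e1, e2]
      abel
    exact sub_eq_zero.mp ((smul_eq_zero.mp this).resolve_left hn1)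
  have hbc : b = c := by
    have : ((n : ℂ) - 1) • (b - c) = 0 := by
      rw [smul_sub, sub_smul, sub_smul, one_smul, one_smul, e2, e3]
      abel
    exact sub_eq_zero.mp ((smul_eq_zero.mp this).resolve_left hn1)
  have hn2 : ((n : ℂ) + 2) ≠ 0 := by
    have h6 : ((n + 2 : ℕ) : ℂ) ≠ 0 := Nat.cast_ne_zero.mpr (by omega)
    push_cast at h6; exact h6
  have ha0 : a = 0 := by
    have h5 : ((n : ℂ) + 2) • a = 0 := by
      rw [add_smul, e1, ← hab, ← hab.trans hbc, two_smul]
      abel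
    exact (smul_eq_zero.mp h5).resolve_left hn2
  exact ⟨ha0, hab ▸ ha0, (hab.trans hbc) ▸ ha0⟩
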